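/- Let γ ∈ ℝ and define P¹(α,β) := −(3/(8π)) sin²β cos(2α). Then P¹ solves the order-B equation of the steady-state kinetic hierarchy: (γ/2) [ −3·(1/(4π)) sin(2α) sin²β + ∂_α P¹(α,β) ] = 0 for all α, β ∈ ℝ, and moreover P¹ has zero mean over the sphere: ∫₀^{2π} ∫₀^{π} P¹(α,β) sin β dβ dα = 0. -/

import Mathlib

open MeasureTheory intervalIntegral

/-- The first-order (in the Bretherton constant) correction to the orientation
distribution: `P¹(α,β) = −(3/(8π)) sin²β cos(2α)`. -/
noncomputable def P1 (α β : ℝ) : ℝ :=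
  -(3 / (8 * Real.pi)) * Real.sin β ^ 2 * Real.cos (2 * α)

lemma P1_deriv (α β : ℝ) :
    deriv (fun a => P1 a β) α
      = 3 / (4 * Real.pi) * Real.sin β ^ 2 * Real.sin (2 * α) := by
  have h1 : HasDerivAt (fun a : ℝ => Real.cos (2 * a))
      (-Real.sin (2 * α) * 2) α := by
    have := (Real.hasDerivAt_cos (2 * α)).comp α
      ((hasDerivAt_id α).const_mul 2)
    simpa [Function.comp_def, mul_comm] using this
  have h : HasDerivAt (fun a : ℝ => P1 a β)
      (3 / (4 * Real.pi) * Real.sin β ^ 2 * Real.sin (2 * α)) α := by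
    have := h1.const_mul (-(3 / (8 * Real.pi)) * Real.sin β ^ 2)
    exact this.congr_deriv (by ring)
  exact h.deriv

lemma cos_two_mul_integral :
    (∫ α in (0:ℝ)..(2 * Real.pi), Real.cos (2 * α)) = 0 := by
  have h := intervalIntegral.integral_comp_mul_left (a := (0:ℝ)) (b := 2 * Real.pi)
    (c := 2) (fun x => Real.cos x) (by norm_num)
  rw [h, integral_cos]
  have h4 : Real.sin (2 * (2 * Real.pi)) = 0 := by
    have := Real.sin_nat_mul_pi 4
    push_cast at this
    rw [show (2:ℝ) * (2 * Real.pi) = 4 * Real.pi by ring]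
    exact this
  simp [h4]

/-- `P¹` solves the order-`B` equation
`(γ/2)[−3(1/(4π)) sin(2α) sin²β + ∂_α P¹] = 0` and has zero mean over the
sphere. -/
theorem P1_solves_orderB (γ : ℝ) :
    (∀ α β : ℝ,
      γ / 2 * (-3 * (1 / (4 * Real.pi)) * Real.sin (2 * α) * Real.sin β ^ 2
        + deriv (fun a => P1 a β) α) = 0)
    ∧ (∫ α in (0:ℝ)..(2 * Real.pi), ∫ β in (0:ℝ)..Real.pi,
        P1 α β * Real.sin β) = 0 := by
  constructor
  · intro α β
    rw [P1_deriv]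
    have hπ : Real.pi ≠ 0 := Real.pi_ne_zero
    field_simp
    ring
  · have key : ∀ α : ℝ, (∫ β in (0:ℝ)..Real.pi, P1 α β * Real.sin β)
        = (-(3 / (8 * Real.pi)) * (∫ β in (0:ℝ)..Real.pi, Real.sin β ^ 2 * Real.sin β))
          * Real.cos (2 * α) := by
      intro α
      rw [mul_assoc, ← intervalIntegral.integral_mul_const,
        ← intervalIntegral.integral_const_mul]
      congr 1; ext β; unfold P1; ring
    simp only [key]
    rw [intervalIntegral.integral_const_mul, cos_two_mul_integral, mul_zero]
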